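/- Dissipativity of the friction/viscous interface terms (step (4) of the energy theorem). Let N ≥ 1, let u_1,…,u_N ∈ ℝ² with u_1 ≠ 0, set u_{N+1} := 0, let η_{α+1/2} ≥ 0 for α = 1,…,N, h_{α+1/2} > 0 for α = 1,…,N−1, h_N > 0, and μ, ρ, g, h ≥ 0. Define K_{1/2} := −μ ρ g h u_1/|u_1|, K_{α+1/2} := −η_{α+1/2}(u_{α+1} − u_α)/h_{α+1/2} for α = 1,…,N−1, and K_{N+1/2} := −η_{N+1/2}(u_{N+1} − u_N)/h_N. Then Σ_{α=1}^N u_α·(K_{α−1/2} − K_{α+1/2}) = −μ ρ g h |u_1| − (η_{N+1/2}/h_N)|u_N|² − Σ_{α=1}^{N−1} (η_{α+1/2}/h_{α+1/2}) |u_{α+1} − u_α|², and in particular this sum is ≤ 0. -/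

import Mathlib

/-- Euclidean dot product on `ℝ²`. -/
def dot2 (a b : ℝ × ℝ) : ℝ := a.1 * b.1 + a.2 * b.2

/-- Euclidean norm on `ℝ²`. -/
noncomputable def eunorm (a : ℝ × ℝ) : ℝ := Real.sqrt (a.1 ^ 2 + a.2 ^ 2)

lemma eunorm_nonneg (a : ℝ × ℝ) : 0 ≤ eunorm a := Real.sqrt_nonneg _

lemma eunorm_pos {a : ℝ × ℝ} (ha : a ≠ 0) : 0 < eunorm a := by
  apply Real.sqrt_pos.2
  have h1 : a.1 ≠ 0 ∨ a.2 ≠ 0 := by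
    by_contra hc
    push_neg at hc
    exact ha (Prod.ext hc.1 hc.2)
  rcases h1 with h1 | h1
  · have := mul_self_pos.mpr h1
    nlinarith [sq_nonneg a.2]
  · have := mul_self_pos.mpr h1
    nlinarith [sq_nonneg a.1]

lemma dot2_self (a : ℝ × ℝ) : dot2 a a = (eunorm a) ^ 2 := by
  rw [eunorm, Real.sq_sqrt (by positivity)]
  simp [dot2]; ring

lemma dot2_smul (c : ℝ) (a b : ℝ × ℝ) : dot2 a (c • b) = c * dot2 a b := by
  simp [dot2, Prod.smul_fst, Prod.smul_snd, smul_eq_mul]; ring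

lemma dot2_sub_right (a x y : ℝ × ℝ) : dot2 a (x - y) = dot2 a x - dot2 a y := by
  simp [dot2]; ring

lemma dot2_sub_left (a b x : ℝ × ℝ) : dot2 (a - b) x = dot2 a x - dot2 b x := by
  simp [dot2]; ring

lemma sum_Icc_one_eq_sum_range (N : ℕ) (f : ℕ → ℝ) :
    ∑ α ∈ Finset.Icc 1 N, f α = ∑ i ∈ Finset.range N, f (i + 1) := by
  rw [← Finset.Ico_add_one_right_eq_Icc, Finset.sum_Ico_eq_sum_range]
  simp [add_comm]

/-- Dissipativity of the friction/viscous interface terms of the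
multilayer shallow model. -/
theorem interface_terms_dissipative
    (N : ℕ) (hN : 1 ≤ N)
    (u : ℕ → ℝ × ℝ) (hu1 : u 1 ≠ 0) (hu_top : u (N + 1) = 0)
    (η : ℕ → ℝ) (hη : ∀ α ∈ Finset.Icc 1 N, 0 ≤ η α)
    (hmid : ℕ → ℝ) (hmid_pos : ∀ α ∈ Finset.Icc 1 (N - 1), 0 < hmid α)
    (hNl : ℝ) (hNl_pos : 0 < hNl)
    (μ ρ g h : ℝ) (hμ : 0 ≤ μ) (hρ : 0 ≤ ρ) (hg : 0 ≤ g) (hh : 0 ≤ h)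
    (K : ℕ → ℝ × ℝ)
    (K_bot : K 0 = (-(μ * ρ * g * h) / eunorm (u 1)) • u 1)
    (K_mid : ∀ α ∈ Finset.Icc 1 (N - 1),
      K α = (-(η α / hmid α)) • (u (α + 1) - u α))
    (K_top : K N = (-(η N / hNl)) • (u (N + 1) - u N)) :
    (∑ α ∈ Finset.Icc 1 N, dot2 (u α) (K (α - 1) - K α))
      = -(μ * ρ * g * h * eunorm (u 1)) - η N / hNl * (eunorm (u N)) ^ 2
        - ∑ α ∈ Finset.Icc 1 (N - 1), η α / hmid α * (eunorm (u (α + 1) - u α)) ^ 2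
    ∧ (∑ α ∈ Finset.Icc 1 N, dot2 (u α) (K (α - 1) - K α)) ≤ 0 := by
  have hn1 : (0:ℝ) < eunorm (u 1) := eunorm_pos hu1
  have hNsub : N - 1 + 1 = N := Nat.sub_add_cancel hN
  have key : (∑ α ∈ Finset.Icc 1 N, dot2 (u α) (K (α - 1) - K α))
      = -(μ * ρ * g * h * eunorm (u 1)) - η N / hNl * (eunorm (u N)) ^ 2
        - ∑ α ∈ Finset.Icc 1 (N - 1), η α / hmid α * (eunorm (u (α + 1) - u α)) ^ 2 := by
    have e1 : (∑ α ∈ Finset.Icc 1 N, dot2 (u α) (K (α - 1) - K α))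
        = ∑ i ∈ Finset.range N,
            (dot2 (u (i + 1)) (K i) - dot2 (u (i + 1)) (K (i + 1))) := by
      rw [sum_Icc_one_eq_sum_range]
      refine Finset.sum_congr rfl fun i _ => ?_
      rw [show i + 1 - 1 = i from rfl, dot2_sub_right]
    have eA : ∑ i ∈ Finset.range N, dot2 (u (i + 1)) (K i)
        = ∑ i ∈ Finset.range (N - 1), dot2 (u (i + 1 + 1)) (K (i + 1))
          + dot2 (u 1) (K 0) := by
      conv_lhs => rw [← hNsub]
      rw [Finset.sum_range_succ' (fun i => dot2 (u (i + 1)) (K i))]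
    have eB : ∑ i ∈ Finset.range N, dot2 (u (i + 1)) (K (i + 1))
        = ∑ i ∈ Finset.range (N - 1), dot2 (u (i + 1)) (K (i + 1))
          + dot2 (u N) (K N) := by
      conv_lhs => rw [← hNsub]
      rw [Finset.sum_range_succ (fun i => dot2 (u (i + 1)) (K (i + 1))), hNsub]
    have hA0 : dot2 (u 1) (K 0) = -(μ * ρ * g * h * eunorm (u 1)) := by
      rw [K_bot, dot2_smul, dot2_self]
      field_simp
    have hBN : dot2 (u N) (K N) = η N / hNl * (eunorm (u N)) ^ 2 := by
      rw [K_top, hu_top, zero_sub, dot2_smul]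
      have h2 : dot2 (u N) (-(u N)) = -((eunorm (u N)) ^ 2) := by
        rw [show (-(u N)) = (-1 : ℝ) • u N by simp, dot2_smul, dot2_self]; ring
      rw [h2]; ring
    have eS : ∑ i ∈ Finset.range (N - 1),
          (dot2 (u (i + 1 + 1)) (K (i + 1)) - dot2 (u (i + 1)) (K (i + 1)))
        = -∑ α ∈ Finset.Icc 1 (N - 1),
            η α / hmid α * (eunorm (u (α + 1) - u α)) ^ 2 := by
      have eC : ∀ i ∈ Finset.range (N - 1),
          dot2 (u (i + 1 + 1)) (K (i + 1)) - dot2 (u (i + 1)) (K (i + 1))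
            = -(η (i + 1) / hmid (i + 1)
                * (eunorm (u (i + 1 + 1) - u (i + 1))) ^ 2) := by
        intro i hi
        have hmem : i + 1 ∈ Finset.Icc 1 (N - 1) := by
          simp only [Finset.mem_range] at hi
          simp only [Finset.mem_Icc]
          omega
        rw [← dot2_sub_left, K_mid _ hmem, dot2_smul, dot2_self]
        ring
      rw [Finset.sum_congr rfl eC,
        sum_Icc_one_eq_sum_range (N - 1)
          (fun α => η α / hmid α * (eunorm (u (α + 1) - u α)) ^ 2)]
      rw [← Finset.sum_neg_distrib]
    have esub : ∑ i ∈ Finset.range (N - 1), dot2 (u (i + 1 + 1)) (K (i + 1))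
        - ∑ i ∈ Finset.range (N - 1), dot2 (u (i + 1)) (K (i + 1))
        = ∑ i ∈ Finset.range (N - 1),
            (dot2 (u (i + 1 + 1)) (K (i + 1)) - dot2 (u (i + 1)) (K (i + 1))) :=
      (Finset.sum_sub_distrib _ _).symm
    rw [e1, Finset.sum_sub_distrib, eA, eB]
    linarith [esub, eS, hA0, hBN]
  refine ⟨key, ?_⟩
  rw [key]
  have h1 : 0 ≤ μ * ρ * g * h * eunorm (u 1) := by
    have := eunorm_nonneg (u 1); positivity
  have h2 : 0 ≤ η N / hNl * (eunorm (u N)) ^ 2 := by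
    have hηN : 0 ≤ η N := hη N (by simp only [Finset.mem_Icc]; omega)
    positivity
  have h3 : 0 ≤ ∑ α ∈ Finset.Icc 1 (N - 1), η α / hmid α * (eunorm (u (α + 1) - u α)) ^ 2 := by
    apply Finset.sum_nonneg
    intro α hα
    have hα' : 0 ≤ η α := by
      apply hη
      simp only [Finset.mem_Icc] at hα ⊢
      omega
    have := hmid_pos α hα
    positivity
  linarith
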